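/- For any probability weight vector w (with nonnegative entries summing to 1) and any random vector Y with Y = ν + LZ where Z is standard d-dimensional Gaussian and LLᵀ = Σ, the probability P(1ᵀ exp(Y) ≤ γ) is at most Φ̄((wᵀν − ln γ − wᵀ ln w)/√(wᵀΣw)), where Φ̄ is the standard normal complementary cdf. -/

import Mathlib

open MeasureTheory ProbabilityTheory Matrix Real Set
open scoped NNReal ENNReal

/-- The standard normal complementary cdf `Φ̄`. -/
noncomputable def stdGaussianCCDF (x : ℝ) : ℝ :=
  ((gaussianReal 0 1) (Set.Ioi x)).toReal

lemma gaussianPDFReal_conv {v1 v2 : ℝ≥0} (h1 : v1 ≠ 0) (h2 : v2 ≠ 0) (u : ℝ) :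
    ∫ x : ℝ, gaussianPDFReal 0 v1 x * gaussianPDFReal 0 v2 (u - x)
      = gaussianPDFReal 0 (v1 + v2) u := by
  have hv1 : (0:ℝ) < v1 := lt_of_le_of_ne v1.coe_nonneg (by exact_mod_cast (Ne.symm h1))
  have hv2 : (0:ℝ) < v2 := lt_of_le_of_ne v2.coe_nonneg (by exact_mod_cast (Ne.symm h2))
  have hne1 : (v1:ℝ) ≠ 0 := ne_of_gt hv1
  have hne2 : (v2:ℝ) ≠ 0 := ne_of_gt hv2
  have hne12 : (v1:ℝ) + v2 ≠ 0 := by positivity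
  have hpi : (π:ℝ) ≠ 0 := Real.pi_ne_zero
  set b : ℝ := ((v1:ℝ) + v2) / (2 * v1 * v2) with hb
  have hbpos : 0 < b := by positivity
  have hbne : b ≠ 0 := ne_of_gt hbpos
  set m : ℝ := u * v1 / (v1 + v2) with hm
  set c : ℝ := (√(2 * π * v1))⁻¹ * (√(2 * π * v2))⁻¹ * rexp (- u^2 / (2 * (v1 + v2))) with hc
  have key : ∀ x : ℝ, gaussianPDFReal 0 v1 x * gaussianPDFReal 0 v2 (u - x)
      = c * rexp (-b * (x - m)^2) := by
    intro x
    have hexp : -x ^ 2 / (2 * (v1:ℝ)) + -(u - x) ^ 2 / (2 * (v2:ℝ))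
        = - u^2 / (2 * ((v1:ℝ) + v2)) + (-b * (x - m)^2) := by
      rw [hb, hm]; field_simp; ring
    simp only [gaussianPDFReal, sub_zero]
    rw [show (√(2 * π * (v1:ℝ)))⁻¹ * rexp (-x ^ 2 / (2 * (v1:ℝ))) *
        ((√(2 * π * (v2:ℝ)))⁻¹ * rexp (-(u - x) ^ 2 / (2 * (v2:ℝ))))
        = (√(2 * π * (v1:ℝ)))⁻¹ * (√(2 * π * (v2:ℝ)))⁻¹ *
          rexp (-x ^ 2 / (2 * (v1:ℝ)) + -(u - x) ^ 2 / (2 * (v2:ℝ))) by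
      rw [Real.exp_add]; ring]
    rw [hexp, Real.exp_add, hc]
    ring
  rw [funext key, MeasureTheory.integral_const_mul]
  have hint : ∫ x : ℝ, rexp (-b * (x - m)^2) = √(π / b) := by
    rw [← integral_gaussian b]
    exact integral_sub_right_eq_self (fun x => rexp (-b * x^2)) m
  rw [hint]
  have hsq : √(π / b) = √(2 * π * v1) * √(2 * π * v2) / √(2 * π * ((v1:ℝ) + v2)) := by
    rw [← Real.sqrt_mul (by positivity), ← Real.sqrt_div (by positivity)]
    congr 1
    rw [hb]
    field_simp
  rw [hsq, hc, gaussianPDFReal]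
  have h1' : √(2 * π * (v1:ℝ)) ≠ 0 := by positivity
  have h2' : √(2 * π * (v2:ℝ)) ≠ 0 := by positivity
  have h12 : √(2 * π * ((v1:ℝ) + v2)) ≠ 0 := by positivity
  push_cast
  field_simp
  rw [sub_zero]

lemma integrable_gaussianPDFReal_conv (v1 v2 : ℝ≥0) (u : ℝ) :
    Integrable (fun x => gaussianPDFReal 0 v1 x * gaussianPDFReal 0 v2 (u - x)) := by
  set C : ℝ := (√(2 * π * v2))⁻¹ with hC
  have hC0 : 0 ≤ C := by positivity
  have hbd : ∀ y : ℝ, gaussianPDFReal 0 v2 y ≤ C := by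
    intro y
    rw [gaussianPDFReal, sub_zero]
    calc (√(2 * π * v2))⁻¹ * rexp (-y ^ 2 / (2 * v2)) ≤ (√(2 * π * v2))⁻¹ * 1 := by
          gcongr
          exact Real.exp_le_one_iff.2 (div_nonpos_iff.2 (Or.inr ⟨neg_nonpos.2 (sq_nonneg y), by positivity⟩))
      _ = C := by rw [mul_one]
  refine Integrable.mono ((integrable_gaussianPDFReal 0 v1).const_mul C) ?_ ?_
  · exact ((stronglyMeasurable_gaussianPDFReal 0 v1).mul
      ((stronglyMeasurable_gaussianPDFReal 0 v2).comp_measurable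
        (measurable_const.sub measurable_id))).aestronglyMeasurable
  · refine Filter.Eventually.of_forall fun x => ?_
    rw [Real.norm_eq_abs, Real.norm_eq_abs,
      abs_of_nonneg (mul_nonneg (gaussianPDFReal_nonneg _ _ _) (gaussianPDFReal_nonneg _ _ _)),
      abs_of_nonneg (mul_nonneg hC0 (gaussianPDFReal_nonneg _ _ _))]
    rw [mul_comm C _]
    exact mul_le_mul_of_nonneg_left (hbd _) (gaussianPDFReal_nonneg _ _ _)

lemma gaussianPDF_conv {v1 v2 : ℝ≥0} (h1 : v1 ≠ 0) (h2 : v2 ≠ 0) (u : ℝ) :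
    ∫⁻ x : ℝ, gaussianPDF 0 v1 x * gaussianPDF 0 v2 (u - x)
      = gaussianPDF 0 (v1 + v2) u := by
  simp_rw [gaussianPDF,
    ← ENNReal.ofReal_mul (gaussianPDFReal_nonneg 0 v1 _)]
  rw [← ofReal_integral_eq_lintegral_ofReal (integrable_gaussianPDFReal_conv v1 v2 u)
    (Filter.Eventually.of_forall fun x =>
      mul_nonneg (gaussianPDFReal_nonneg _ _ _) (gaussianPDFReal_nonneg _ _ _)),
    gaussianPDFReal_conv h1 h2 u]

lemma gaussianReal_conv (v1 v2 : ℝ≥0) :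
    ((gaussianReal 0 v1).prod (gaussianReal 0 v2)).map (fun p : ℝ × ℝ => p.1 + p.2)
      = gaussianReal 0 (v1 + v2) := by
  rcases eq_or_ne v1 0 with rfl | h1
  · rw [gaussianReal_zero_var, Measure.dirac_prod,
      Measure.map_map measurable_add measurable_prodMk_left]
    have h : ((fun p : ℝ × ℝ => p.1 + p.2) ∘ Prod.mk (0:ℝ)) = (fun y : ℝ => (0:ℝ) + y) := rfl
    rw [h, gaussianReal_map_const_add, add_zero, zero_add]
  rcases eq_or_ne v2 0 with rfl | h2
  · rw [gaussianReal_zero_var, Measure.prod_dirac,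
      Measure.map_map measurable_add measurable_prodMk_right]
    have h : ((fun p : ℝ × ℝ => p.1 + p.2) ∘ (fun x : ℝ => (x, (0:ℝ)))) = (fun x : ℝ => x + 0) := rfl
    rw [h, gaussianReal_map_add_const, add_zero, add_zero]
  have h12 : v1 + v2 ≠ 0 := fun h => h1 (by simpa using (add_eq_zero.1 h).1)
  have : IsProbabilityMeasure (((gaussianReal 0 v1).prod (gaussianReal 0 v2)).map
      (fun p : ℝ × ℝ => p.1 + p.2)) := Measure.isProbabilityMeasure_map measurable_add.aemeasurable
  refine Measure.ext_of_Iic _ _ fun t => ?_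
  rw [Measure.map_apply measurable_add measurableSet_Iic,
    Measure.prod_apply (measurable_add measurableSet_Iic)]
  have hpre : ∀ x : ℝ, (Prod.mk x ⁻¹' ((fun p : ℝ × ℝ => p.1 + p.2) ⁻¹' Iic t)) = Iic (t - x) := by
    intro x
    ext y
    simp [le_sub_iff_add_le, add_comm]
  simp_rw [hpre]
  have hmg : Measurable fun x : ℝ => gaussianReal 0 v2 (Iic (t - x)) := by
    have hanti : Antitone fun x : ℝ => gaussianReal 0 v2 (Iic (t - x)) := by
      intro x y hxy
      exact measure_mono (Iic_subset_Iic.2 (by linarith))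
    exact hanti.measurable
  rw [gaussianReal_of_var_ne_zero 0 h1,
    lintegral_withDensity_eq_lintegral_mul _ (measurable_gaussianPDF 0 v1) hmg]
  simp only [Pi.mul_apply]
  have hset : ∀ x : ℝ, gaussianReal 0 v2 (Iic (t - x))
      = ∫⁻ y : ℝ, (Iic (t - x)).indicator (gaussianPDF 0 v2) y := by
    intro x
    rw [gaussianReal_apply 0 h2, ← lintegral_indicator measurableSet_Iic]
  simp_rw [hset, ← lintegral_const_mul _ ((measurable_gaussianPDF 0 v2).indicator measurableSet_Iic)]
  have hshift : ∀ x : ℝ,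
      (∫⁻ y : ℝ, gaussianPDF 0 v1 x * (Iic (t - x)).indicator (gaussianPDF 0 v2) y)
      = ∫⁻ u : ℝ, (Iic t).indicator (fun u => gaussianPDF 0 v1 x * gaussianPDF 0 v2 (u - x)) u := by
    intro x
    rw [← lintegral_sub_right_eq_self
      (fun y => gaussianPDF 0 v1 x * (Iic (t - x)).indicator (gaussianPDF 0 v2) y) x]
    congr 1
    ext u
    by_cases hu : u ≤ t
    · rw [indicator_of_mem (by simpa using hu : u - x ∈ Iic (t - x)),
        indicator_of_mem (by simpa using hu)]
    · rw [indicator_of_notMem (by simpa using hu : ¬ (u - x ∈ Iic (t - x))),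
        indicator_of_notMem (by simpa using hu), mul_zero]
  simp_rw [hshift]
  rw [lintegral_lintegral_swap]
  · have hfix : ∀ u : ℝ,
        (∫⁻ x : ℝ, (Iic t).indicator (fun u => gaussianPDF 0 v1 x * gaussianPDF 0 v2 (u - x)) u)
        = (Iic t).indicator (gaussianPDF 0 (v1 + v2)) u := by
      intro u
      by_cases hu : u ≤ t
      · simp_rw [indicator_of_mem (by simpa using hu : u ∈ Iic t)]
        exact gaussianPDF_conv h1 h2 u
      · simp_rw [indicator_of_notMem (by simpa using hu : ¬ u ∈ Iic t)]
        simp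
    simp_rw [hfix]
    rw [lintegral_indicator measurableSet_Iic, ← gaussianReal_apply 0 h12]
  · apply Measurable.aemeasurable
    have : (Function.uncurry fun x u =>
        (Iic t).indicator (fun u => gaussianPDF 0 v1 x * gaussianPDF 0 v2 (u - x)) u)
        = {p : ℝ × ℝ | p.2 ≤ t}.indicator
            (fun p => gaussianPDF 0 v1 p.1 * gaussianPDF 0 v2 (p.2 - p.1)) := by
      ext p
      simp [Function.uncurry, Set.indicator_apply]
    rw [this]
    exact (((measurable_gaussianPDF 0 v1).comp measurable_fst).mul
      ((measurable_gaussianPDF 0 v2).comp (measurable_snd.sub measurable_fst))).indicator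
      (measurableSet_le measurable_snd measurable_const)

lemma map_sum_gaussian : ∀ (n : ℕ) (a : Fin n → ℝ),
    (Measure.pi fun _ : Fin n => gaussianReal 0 1).map (fun z => ∑ i, a i * z i)
      = gaussianReal 0 (∑ i, (⟨(a i)^2, sq_nonneg _⟩ : ℝ≥0)) := by
  intro n
  induction n with
  | zero =>
    intro a
    have h : (fun z : Fin 0 → ℝ => ∑ i, a i * z i) = fun _ => (0:ℝ) := by
      funext z; simp
    rw [h, Measure.map_const, measure_univ, one_smul]
    rw [← gaussianReal_zero_var]
    congr 1
  | succ n ih =>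
    intro a
    set e := MeasurableEquiv.piFinSuccAbove (fun _ : Fin (n+1) => ℝ) 0 with he
    have hmp := measurePreserving_piFinSuccAbove (fun _ : Fin (n+1) => gaussianReal 0 1) 0
    set g : ℝ × (Fin n → ℝ) → ℝ := fun p => a 0 * p.1 + ∑ j, a j.succ * p.2 j with hg
    have hgm : Measurable g := by
      apply Measurable.add
      · exact (measurable_const.mul measurable_fst)
      · exact Finset.measurable_sum _ fun j _ =>
          measurable_const.mul ((measurable_pi_apply j).comp measurable_snd)
    have hcomp : (fun z : Fin (n+1) → ℝ => ∑ i, a i * z i) = g ∘ e := by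
      funext z
      simp only [Function.comp_apply, hg, he, MeasurableEquiv.piFinSuccAbove_apply]
      rw [Fin.sum_univ_succ]
      simp [Fin.succAbove_zero, Fin.tail]
    rw [hcomp, ← Measure.map_map hgm e.measurable, hmp.map_eq]
    have hsplit : g = (fun p : ℝ × ℝ => p.1 + p.2) ∘
        Prod.map (fun x : ℝ => a 0 * x) (fun y : Fin n → ℝ => ∑ j, a j.succ * y j) := rfl
    have hf1 : Measurable (fun x : ℝ => a 0 * x) := by fun_prop
    have hf2 : Measurable (fun y : Fin n → ℝ => ∑ j, a j.succ * y j) := by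
      exact Finset.measurable_sum _ fun j _ => (measurable_pi_apply j).const_mul _
    rw [hsplit, ← Measure.map_map measurable_add (hf1.prodMap hf2),
      ← Measure.map_prod_map _ _ hf1 hf2]
    rw [show ((gaussianReal 0 1).map fun x : ℝ => a 0 * x) = gaussianReal 0 (NNReal.mk ((a 0)^2) (sq_nonneg _)) by
      rw [gaussianReal_map_const_mul (a 0), mul_zero, mul_one]]
    rw [ih fun j => a j.succ, gaussianReal_conv]
    congr 1
    ext
    push_cast
    have e1 := NNReal.coe_sum Finset.univ (fun i : Fin (n+1) => NNReal.mk ((a i)^2) (sq_nonneg _))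
    have e2 := NNReal.coe_sum Finset.univ (fun i : Fin n => NNReal.mk ((a i.succ)^2) (sq_nonneg _))
    rw [Fin.sum_univ_succ (f := fun i : Fin (n+1) => ((NNReal.mk ((a i)^2) (sq_nonneg _) : ℝ≥0) : ℝ)), ← e2] at e1
    exact e1.symm

/-- For any probability weight vector `w` and `Y = ν + L Z` with `Z`
standard `d`-dimensional Gaussian and `L Lᵀ = Σ`, the probability
`P(1ᵀ exp(Y) ≤ γ)` is bounded by `Φ̄((wᵀν − ln γ − wᵀ ln w)/√(wᵀ Σ w))`. -/
theorem sln_left_tail_gaussian_bound {d : ℕ}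
    (L : Matrix (Fin d) (Fin d) ℝ) (ν : Fin d → ℝ)
    (hpos : (L * Lᵀ).PosDef)
    (w : Fin d → ℝ) (hw0 : ∀ i, 0 ≤ w i) (hw1 : ∑ i, w i = 1)
    (γ : ℝ) (hγ : 0 < γ) :
    (((Measure.pi fun _ : Fin d => gaussianReal 0 1).map
        (fun z => ν + L.mulVec z)) {y | ∑ i, Real.exp (y i) ≤ γ}).toReal ≤
      stdGaussianCCDF
        ((∑ i, w i * ν i - Real.log γ - ∑ i, w i * Real.log (w i)) /
          Real.sqrt (w ⬝ᵥ (L * Lᵀ).mulVec w)) := by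
  classical
  set μpi := Measure.pi fun _ : Fin d => gaussianReal 0 1 with hμpi
  set m : ℝ := ∑ i, w i * ν i with hm
  set c : ℝ := Real.log γ + ∑ i, w i * Real.log (w i) with hc
  set a : Fin d → ℝ := fun j => ∑ i, w i * L i j with ha
  set σ2 : ℝ := w ⬝ᵥ (L * Lᵀ).mulVec w with hσ2def
  -- w ≠ 0
  have hwne : w ≠ 0 := by
    intro h
    rw [h] at hw1
    simp at hw1
  -- positivity of σ2
  have hσ2pos : 0 < σ2 := by
    have := hpos.dotProduct_mulVec_pos hwne
    simpa using this
  -- variance identity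
  have hvar : σ2 = ∑ j, (a j)^2 := by
    rw [hσ2def, ← Matrix.mulVec_mulVec, Matrix.dotProduct_mulVec, Matrix.mulVec_transpose]
    simp only [dotProduct, Matrix.vecMul, dotProduct, ha]
    exact Finset.sum_congr rfl fun j _ => by ring
  set s : ℝ := Real.sqrt σ2 with hs
  have hspos : 0 < s := Real.sqrt_pos.2 hσ2pos
  -- the two sets
  set S : Set (Fin d → ℝ) := {y | ∑ i, Real.exp (y i) ≤ γ} with hS
  set T : Set (Fin d → ℝ) := {y | ∑ i, w i * y i ≤ c} with hT
  -- S ⊆ T via Jensen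
  have hST : S ⊆ T := by
    intro y hy
    have hjensen := convexOn_exp.map_sum_le (t := Finset.univ)
      (w := w) (p := fun i => y i - Real.log (w i))
      (fun i _ => hw0 i) hw1 (fun i _ => Set.mem_univ _)
    have hterm : ∀ i, w i * Real.exp (y i - Real.log (w i)) ≤ Real.exp (y i) := by
      intro i
      rcases eq_or_lt_of_le (hw0 i) with h | h
      · rw [← h, zero_mul]; positivity
      · rw [Real.exp_sub, Real.exp_log h]
        rw [mul_div_assoc']
        rw [mul_comm, mul_div_assoc, div_self (ne_of_gt h), mul_one]
    have h1 : Real.exp (∑ i, w i * (y i - Real.log (w i))) ≤ γ := by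
      refine le_trans ?_ (le_trans (Finset.sum_le_sum fun i _ => hterm i) hy)
      simpa [smul_eq_mul] using hjensen
    have h2 : ∑ i, w i * (y i - Real.log (w i)) ≤ Real.log γ := by
      have := Real.log_le_log (Real.exp_pos _) h1
      rwa [Real.log_exp] at this
    have h3 : ∑ i, w i * (y i - Real.log (w i))
        = ∑ i, w i * y i - ∑ i, w i * Real.log (w i) := by
      rw [← Finset.sum_sub_distrib]
      exact Finset.sum_congr rfl fun i _ => mul_sub _ _ _
    rw [h3] at h2
    simp only [hT, Set.mem_setOf_eq, hc]
    linarith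
  -- measurability
  have hf : Measurable (fun z : Fin d → ℝ => ν + L.mulVec z) := by
    rw [measurable_pi_iff]
    intro i
    simp only [Pi.add_apply, Matrix.mulVec, dotProduct]
    exact measurable_const.add (Finset.measurable_sum _ fun j _ =>
      (measurable_pi_apply j).const_mul _)
  have hsum : Measurable (fun y : Fin d → ℝ => ∑ i, w i * y i) :=
    Finset.measurable_sum _ fun i _ => (measurable_pi_apply i).const_mul _
  have hasum : Measurable (fun z : Fin d → ℝ => ∑ j, a j * z j) :=
    Finset.measurable_sum _ fun i _ => (measurable_pi_apply i).const_mul _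
  have hTmeas : MeasurableSet T := measurableSet_le hsum measurable_const
  -- preimage of T
  have hpre : (fun z : Fin d → ℝ => ν + L.mulVec z) ⁻¹' T
      = (fun z : Fin d → ℝ => ∑ j, a j * z j) ⁻¹' Set.Iic (c - m) := by
    ext z
    simp only [Set.mem_preimage, hT, Set.mem_setOf_eq, Set.mem_Iic, Pi.add_apply]
    have hswap : ∑ i, w i * (ν i + L.mulVec z i) = m + ∑ j, a j * z j := by
      simp_rw [mul_add, Finset.sum_add_distrib, hm]
      congr 1
      simp_rw [Matrix.mulVec, dotProduct, Finset.mul_sum, ha, Finset.sum_mul]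
      rw [Finset.sum_comm]
      exact Finset.sum_congr rfl fun j _ => Finset.sum_congr rfl fun i _ => (mul_assoc _ _ _).symm
    rw [hswap]
    constructor <;> intro h <;> linarith
  -- the gaussian variance as ℝ≥0
  set V : ℝ≥0 := ∑ j, (⟨(a j)^2, sq_nonneg _⟩ : ℝ≥0) with hV
  have hVcoe : (V : ℝ) = σ2 := by
    rw [hV, hvar]
    push_cast
    exact NNReal.coe_sum _ _
  -- symmetric gaussian
  have hsym : (gaussianReal 0 1).map (fun x : ℝ => -x) = gaussianReal 0 1 := by
    have h := gaussianReal_map_const_mul (μ := 0) (v := 1) (-1)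
    have h1 : ((fun x : ℝ => -1 * x)) = (fun x : ℝ => -x) := by funext x; ring
    have h2 : ((NNReal.mk ((-1:ℝ)^2) (sq_nonneg _)) * 1) = 1 := by ext; norm_num
    rw [h1, h2] at h
    simpa using h
  haveI : NullSingletonClass (gaussianReal 0 1) :=
    ⟨fun x => (gaussianReal_absolutelyContinuous 0 one_ne_zero) (measure_singleton x)⟩
  have hIic_Ioi : ∀ y : ℝ, gaussianReal 0 1 (Set.Iic y) = gaussianReal 0 1 (Set.Ioi (-y)) := by
    intro y
    calc gaussianReal 0 1 (Set.Iic y)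
        = ((gaussianReal 0 1).map (fun x : ℝ => -x)) (Set.Iic y) := by rw [hsym]
      _ = gaussianReal 0 1 ((fun x : ℝ => -x) ⁻¹' Set.Iic y) :=
          Measure.map_apply measurable_neg measurableSet_Iic
      _ = gaussianReal 0 1 (Set.Ici (-y)) := by
          congr 1
          ext x
          simp [neg_le]
      _ = gaussianReal 0 1 (Set.Ioi (-y)) := (measure_congr (Ioi_ae_eq_Ici)).symm
  -- gaussianReal 0 V as scaled standard gaussian
  have hVscale : gaussianReal 0 V = (gaussianReal 0 1).map (fun x : ℝ => s * x) := by
    rw [gaussianReal_map_const_mul s, mul_zero]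
    congr 1
    ext
    push_cast
    rw [Real.sq_sqrt hσ2pos.le, hVcoe]
    simp
  -- main computation
  have hmain : (μpi.map (fun z => ν + L.mulVec z)) T
      = gaussianReal 0 1 (Set.Ioi ((m - c) / s)) := by
    rw [Measure.map_apply hf hTmeas, hpre,
      ← Measure.map_apply hasum measurableSet_Iic,
      map_sum_gaussian d a, ← hV, hVscale,
      Measure.map_apply (by fun_prop) measurableSet_Iic]
    have hpre2 : (fun x : ℝ => s * x) ⁻¹' Set.Iic (c - m) = Set.Iic ((c - m) / s) := by
      ext x
      simp only [Set.mem_preimage, Set.mem_Iic]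
      rw [le_div_iff₀ hspos, mul_comm]
    rw [hpre2, hIic_Ioi]
    congr 2
    field_simp
    ring
  -- finish
  have hle : (μpi.map (fun z => ν + L.mulVec z)) S ≤ gaussianReal 0 1 (Set.Ioi ((m - c) / s)) := by
    rw [← hmain]
    exact measure_mono hST
  have harg : (m - c) / s
      = (∑ i, w i * ν i - Real.log γ - ∑ i, w i * Real.log (w i)) / Real.sqrt σ2 := by
    rw [hm, hc, hs]
    ring_nf
  rw [stdGaussianCCDF, ← harg]
  exact ENNReal.toReal_mono (measure_ne_top _ _) hle
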